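/- Given m customers, n producers, and recommendation size k with k < n ≤ mk, if ℓ = ⌊mk/n⌋ copies of each of the n products are allocated to m customers such that each customer receives at most one copy of each product and at most k products in total, and the allocation process stops only when either all ℓn copies are allocated or some customer has no feasible product remaining, then every producer is allocated to at least one customer and at least n − k producers receive exactly ℓ allocations. -/
import Mathlib


/-- First-phase producer fairness: allocating ℓ = ⌊mk/n⌋ copies of each product
(at most one copy per customer, at most k products per customer), stopping only
when either all copies are allocated or some customer is blocked, gives every
producer nonzero exposure and gives at least n − k producers exactly ℓ. -/
theorem first_phase_producer_fairness
    {m n k ℓ : ℕ} (hk : k < n) (hn : n ≤ m * k) (hℓ : ℓ = m * k / n)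
    (A : Fin m → Finset (Fin n))
    (hcard : ∀ u, (A u).card ≤ k)
    (hexp : ∀ p : Fin n,
      (Finset.univ.filter (fun u : Fin m => p ∈ A u)).card ≤ ℓ)
    (hstop :
      (∀ p : Fin n, (Finset.univ.filter (fun u : Fin m => p ∈ A u)).card = ℓ) ∨
      (∃ u : Fin m, ∀ p : Fin n, p ∉ A u →
        (Finset.univ.filter (fun u' : Fin m => p ∈ A u')).card = ℓ)) :
    (∀ p : Fin n,
      1 ≤ (Finset.univ.filter (fun u : Fin m => p ∈ A u)).card) ∧
    n - k ≤ (Finset.univ.filter (fun p : Fin n =>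
      (Finset.univ.filter (fun u : Fin m => p ∈ A u)).card = ℓ)).card := by
  have hℓ1 : 1 ≤ ℓ := by
    rw [hℓ]
    exact Nat.one_le_div_iff (Nat.pos_of_ne_zero (by omega)) |>.mpr hn
  rcases hstop with hall | ⟨u, hu⟩
  · constructor
    · intro p; rw [hall p]; exact hℓ1
    · have : (Finset.univ.filter (fun p : Fin n =>
        (Finset.univ.filter (fun u : Fin m => p ∈ A u)).card = ℓ)) = Finset.univ := by
        ext p; simp [hall p]
      rw [this, Finset.card_univ, Fintype.card_fin]
      exact Nat.sub_le n k
  · constructor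
    · intro p
      by_cases hp : p ∈ A u
      · apply Finset.card_pos.mpr
        exact ⟨u, Finset.mem_filter.mpr ⟨Finset.mem_univ u, hp⟩⟩
      · rw [hu p hp]; exact hℓ1
    · have hsub : (A u)ᶜ ⊆ Finset.univ.filter (fun p : Fin n =>
        (Finset.univ.filter (fun u : Fin m => p ∈ A u)).card = ℓ) := by
        intro p hp
        simp only [Finset.mem_compl] at hp
        exact Finset.mem_filter.mpr ⟨Finset.mem_univ p, hu p hp⟩
      calc n - k ≤ n - (A u).card := Nat.sub_le_sub_left (hcard u) n
        _ = (A u)ᶜ.card := by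
            rw [Finset.card_compl, Fintype.card_fin]
        _ ≤ _ := Finset.card_le_card hsub
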